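/- If v is a bounded weight on G and H^∞_v(G) is a Banach space, then G equals the holomorphically convex hull of E_v in G: for every z_0 ∈ G and every holomorphic g on G, |g(z_0)| ≤ sup_{ζ ∈ E_v} |g(ζ)|. -/

import Mathlib

open Complex Metric Set Filter Topology MeasureTheory

noncomputable section

/-- `f` is holomorphic on `G` and `sup_{z in G} v z * |f z| < ∞`. -/
def MemHv (G : Set ℂ) (v : ℂ → ℝ) (f : ℂ → ℂ) : Prop :=
  DifferentiableOn ℂ f G ∧ ∃ C : ℝ, ∀ z ∈ G, v z * ‖f z‖ ≤ C

/-- The weighted sup-seminorm `‖f‖_v`. -/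
def HvNorm (G : Set ℂ) (v : ℂ → ℝ) (f : ℂ → ℂ) : ℝ :=
  sSup ((fun z => v z * ‖f z‖) '' G)

/-- A `‖·‖_v`-Cauchy sequence. -/
def HvCauchy (G : Set ℂ) (v : ℂ → ℝ) (F : ℕ → ℂ → ℂ) : Prop :=
  ∀ ε : ℝ, 0 < ε → ∃ N : ℕ, ∀ m ≥ N, ∀ n ≥ N, ∀ z ∈ G,
    v z * ‖F m z - F n z‖ ≤ ε

/-- Convergence in the `‖·‖_v`-seminorm. -/
def HvTendsto (G : Set ℂ) (v : ℂ → ℝ) (F : ℕ → ℂ → ℂ) (f : ℂ → ℂ) : Prop :=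
  ∀ ε : ℝ, 0 < ε → ∃ N : ℕ, ∀ n ≥ N, ∀ z ∈ G,
    v z * ‖F n z - f z‖ ≤ ε

/-- Completeness of `H^∞_v(G)`: every Cauchy sequence converges in the space. -/
def HvComplete (G : Set ℂ) (v : ℂ → ℝ) : Prop :=
  ∀ F : ℕ → ℂ → ℂ, (∀ n, MemHv G v (F n)) → HvCauchy G v F →
    ∃ f : ℂ → ℂ, MemHv G v f ∧ HvTendsto G v F f

/-- The seminorm `‖·‖_v` is a norm: `‖f‖_v = 0` forces `f = 0` on `G`. -/
def HvNormed (G : Set ℂ) (v : ℂ → ℝ) : Prop :=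
  ∀ f : ℂ → ℂ, MemHv G v f → (∀ z ∈ G, v z * ‖f z‖ = 0) →
    ∀ z ∈ G, f z = 0

/-- `H^∞_v(G)` is a Banach space. -/
def IsBanachHv (G : Set ℂ) (v : ℂ → ℝ) : Prop :=
  HvNormed G v ∧ HvComplete G v

/-- Partial sums of the geometric series of `φ`. -/
def geomS (φ : ℂ → ℂ) (n : ℕ) (z : ℂ) : ℂ := ∑ k ∈ Finset.range (n + 1), φ z ^ k

lemma abs_sub_le' (x y : ℂ) : ‖x - y‖ ≤ ‖x‖ + ‖y‖ := by
  exact norm_sub_le x y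

theorem stmt12 (G : Set ℂ) (v : ℂ → ℝ) (hG : IsOpen G) (hGc : IsConnected G)
    (hv : ∀ z ∈ G, 0 ≤ v z) (hbdd : ∃ M : ℝ, ∀ z ∈ G, v z ≤ M)
    (hB : IsBanachHv G v) :
    ∀ z0 ∈ G, ∀ g : ℂ → ℂ, DifferentiableOn ℂ g G →
      ∀ C : ℝ, (∀ ζ ∈ {w ∈ G | 0 < v w}, ‖g ζ‖ ≤ C) →
        ‖g z0‖ ≤ C := by
  intro z0 hz0 g hg C hC
  obtain ⟨M, hM⟩ := hbdd
  by_contra hcon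
  push_neg at hcon
  rcases lt_or_ge C 0 with hC0 | hC0
  · -- In this case the set `{v > 0}` is empty, so `v ≡ 0` on `G`, contradicting normedness.
    have hv0 : ∀ z ∈ G, v z = 0 := by
      intro z hz
      rcases (hv z hz).eq_or_lt with h | h
      · exact h.symm
      · exact absurd (hC z ⟨hz, h⟩) (not_le.2 (lt_of_lt_of_le hC0 (norm_nonneg _)))
    have h1 := hB.1 (fun _ => 1) ⟨differentiableOn_const 1, 0, fun z hz => by simp [hv0 z hz]⟩
      (fun z hz => by simp [hv0 z hz]) z0 hz0
    exact one_ne_zero h1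
  · -- Main case.
    have hgz0 : 0 < ‖g z0‖ := lt_of_le_of_lt hC0 hcon
    have hg0 : g z0 ≠ 0 := by simpa using norm_pos_iff.mp hgz0
    set φ : ℂ → ℂ := fun z => g z / g z0 with hφdef
    have hφdiff : DifferentiableOn ℂ φ G := hg.div_const _
    set r : ℝ := C / ‖g z0‖ with hrdef
    have hr0 : 0 ≤ r := div_nonneg hC0 hgz0.le
    have hr1 : r < 1 := (div_lt_one hgz0).2 hcon
    set M' : ℝ := max M 0 with hM'def
    have hM'0 : 0 ≤ M' := le_max_right _ _
    -- the key pointwise estimate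
    have hkey : ∀ z ∈ G, ∀ k : ℕ, v z * ‖φ z ^ k‖ ≤ M' * r ^ k := by
      intro z hz k
      rcases (hv z hz).eq_or_lt with h | h
      · rw [← h, zero_mul]; positivity
      · have hφz : ‖φ z‖ ≤ r := by
          rw [hφdef]
          simp only [norm_div]
          exact (div_le_div_iff_of_pos_right hgz0).2 (hC z ⟨hz, h⟩)
        rw [norm_pow]
        exact mul_le_mul (le_trans (hM z hz) (le_max_left _ _))
          (pow_le_pow_left₀ (norm_nonneg _) hφz k) (by positivity) hM'0
    have hSmem : ∀ n, MemHv G v (geomS φ n) := by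
      intro n
      refine ⟨DifferentiableOn.fun_sum fun k _ => hφdiff.pow k, M' * (n + 1), fun z hz => ?_⟩
      calc v z * ‖geomS φ n z‖
          ≤ v z * ∑ k ∈ Finset.range (n + 1), ‖φ z ^ k‖ :=
            mul_le_mul_of_nonneg_left (norm_sum_le _ _) (hv z hz)
        _ = ∑ k ∈ Finset.range (n + 1), v z * ‖φ z ^ k‖ := Finset.mul_sum _ _ _
        _ ≤ ∑ k ∈ Finset.range (n + 1), M' * r ^ k :=
            Finset.sum_le_sum fun k _ => hkey z hz k
        _ ≤ ∑ _k ∈ Finset.range (n + 1), M' * 1 :=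
            Finset.sum_le_sum fun k _ =>
              mul_le_mul_of_nonneg_left (pow_le_one₀ hr0 hr1.le) hM'0
        _ = M' * (n + 1) := by
            simp [Finset.sum_const, Finset.card_range, nsmul_eq_mul]; ring
    have h1r : 0 < 1 - r := by linarith
    -- geometric tail estimate
    have htail : ∀ z ∈ G, ∀ m n : ℕ, n ≤ m →
        v z * ‖geomS φ m z - geomS φ n z‖ ≤ M' * r ^ (n + 1) / (1 - r) := by
      intro z hz m n hnm
      have hsub : geomS φ m z - geomS φ n z = ∑ k ∈ Finset.Ico (n + 1) (m + 1), φ z ^ k :=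
        (Finset.sum_Ico_eq_sub _ (Nat.succ_le_succ hnm)).symm
      have hgeo : ∑ k ∈ Finset.Ico (n + 1) (m + 1), r ^ k ≤ r ^ (n + 1) / (1 - r) := by
        rw [geom_sum_Ico hr1.ne (Nat.succ_le_succ hnm)]
        have hp : 0 ≤ r ^ (m + 1) := by positivity
        have heq : (r ^ (m + 1) - r ^ (n + 1)) / (r - 1)
            = (r ^ (n + 1) - r ^ (m + 1)) / (1 - r) := by
          rw [show r - 1 = -(1 - r) by ring, div_neg, ← neg_div, neg_sub]
        rw [heq]
        exact (div_le_div_iff_of_pos_right h1r).2 (by linarith)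
      calc v z * ‖geomS φ m z - geomS φ n z‖
          ≤ v z * ∑ k ∈ Finset.Ico (n + 1) (m + 1), ‖φ z ^ k‖ := by
            rw [hsub]
            exact mul_le_mul_of_nonneg_left (norm_sum_le _ _) (hv z hz)
        _ = ∑ k ∈ Finset.Ico (n + 1) (m + 1), v z * ‖φ z ^ k‖ :=
            Finset.mul_sum _ _ _
        _ ≤ ∑ k ∈ Finset.Ico (n + 1) (m + 1), M' * r ^ k :=
            Finset.sum_le_sum fun k _ => hkey z hz k
        _ = M' * ∑ k ∈ Finset.Ico (n + 1) (m + 1), r ^ k := (Finset.mul_sum _ _ _).symm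
        _ ≤ M' * (r ^ (n + 1) / (1 - r)) := mul_le_mul_of_nonneg_left hgeo hM'0
        _ = M' * r ^ (n + 1) / (1 - r) := by ring
    have htendpow : Tendsto (fun n : ℕ => M' * r ^ (n + 1) / (1 - r)) atTop (nhds 0) := by
      have h := tendsto_pow_atTop_nhds_zero_of_lt_one hr0 hr1
      have h2 := ((h.comp (tendsto_add_atTop_nat 1)).const_mul M').div_const (1 - r)
      simpa [Function.comp] using h2
    have hcau : HvCauchy G v (geomS φ) := by
      intro ε hε
      obtain ⟨N, hN⟩ := eventually_atTop.1 (htendpow.eventually_lt_const hε)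
      refine ⟨N, fun m hm n hn z hz => ?_⟩
      have hmono : ∀ a b : ℕ, N ≤ a → b ≤ a →
          v z * ‖geomS φ a z - geomS φ b z‖ ≤ ε ∨ True := fun _ _ _ _ => Or.inr trivial
      rcases le_total n m with h | h
      · calc v z * ‖geomS φ m z - geomS φ n z‖
            ≤ M' * r ^ (n + 1) / (1 - r) := htail z hz m n h
          _ ≤ ε := (hN n hn).le
      · rw [norm_sub_rev]
        calc v z * ‖geomS φ n z - geomS φ m z‖
            ≤ M' * r ^ (m + 1) / (1 - r) := htail z hz n m h
          _ ≤ ε := (hN m hm).le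
    obtain ⟨f, hfmem, hftend⟩ := hB.2 (geomS φ) hSmem hcau
    set w : ℂ → ℂ := fun z => f z * (1 - φ z) - 1 with hwdef
    have hwdiff : DifferentiableOn ℂ w G :=
      (hfmem.1.mul ((differentiableOn_const 1).sub hφdiff)).sub (differentiableOn_const 1)
    have hwzero : ∀ z ∈ G, v z * ‖w z‖ = 0 := by
      intro z hz
      refine le_antisymm (le_of_forall_pos_le_add fun ε hε => ?_)
        (mul_nonneg (hv z hz) (norm_nonneg _))
      rw [zero_add]
      set A : ℝ := ‖1 - φ z‖ + 1 with hAdef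
      have hA0 : 0 < A := by positivity
      obtain ⟨N₁, hN₁⟩ := hftend (ε / (2 * A)) (by positivity)
      have htend2 : Tendsto (fun n : ℕ => M' * r ^ (n + 1)) atTop (nhds 0) := by
        have h := tendsto_pow_atTop_nhds_zero_of_lt_one hr0 hr1
        have h2 := (h.comp (tendsto_add_atTop_nat 1)).const_mul M'
        simpa [Function.comp] using h2
      obtain ⟨N₂, hN₂⟩ := eventually_atTop.1 (htend2.eventually_lt_const (half_pos hε))
      set n : ℕ := max N₁ N₂ with hndef
      have hid : geomS φ n z * (1 - φ z) = 1 - φ z ^ (n + 1) := by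
        have h := geom_sum_mul (φ z) (n + 1)
        simp only [geomS]
        linear_combination -h
      have hwform : w z = (f z - geomS φ n z) * (1 - φ z) - φ z ^ (n + 1) := by
        rw [hwdef]
        linear_combination hid
      have h1 : v z * ‖f z - geomS φ n z‖ ≤ ε / (2 * A) := by
        rw [norm_sub_rev]
        exact hN₁ n (le_max_left _ _) z hz
      have h2 : ‖1 - φ z‖ ≤ A := by
        rw [hAdef]; linarith
      calc v z * ‖w z‖
          ≤ v z * (‖f z - geomS φ n z‖ * ‖1 - φ z‖
              + ‖φ z ^ (n + 1)‖) := by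
            refine mul_le_mul_of_nonneg_left ?_ (hv z hz)
            rw [hwform, ← norm_mul]
            exact abs_sub_le' _ _
        _ = v z * ‖f z - geomS φ n z‖ * ‖1 - φ z‖
              + v z * ‖φ z ^ (n + 1)‖ := by ring
        _ ≤ (ε / (2 * A)) * A + M' * r ^ (n + 1) := by
            refine add_le_add ?_ (hkey z hz (n + 1))
            exact mul_le_mul h1 h2 (norm_nonneg _) (by positivity)
        _ ≤ ε / 2 + ε / 2 := by
            have hEq : (ε / (2 * A)) * A = ε / 2 := by field_simp
            rw [hEq]
            exact add_le_add le_rfl (hN₂ n (le_max_right _ _)).le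
        _ = ε := by ring
    have hw0 := hB.1 w ⟨hwdiff, 0, fun z hz => le_of_eq (hwzero z hz)⟩ hwzero z0 hz0
    have hφz0 : φ z0 = 1 := div_self hg0
    rw [hwdef] at hw0
    simp only [hφz0, sub_self, mul_zero, zero_sub] at hw0
    exact absurd hw0 (by norm_num)
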